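/- There is an absolute constant D > 0 such that for every H ∈ (0,1) with H ≠ 1/2, every t ∈ [0,1] and every integer j ≥ 0, the coefficients g_n(t,H) at level j satisfy ∑_{k=0}^{2^j − 1} g_{2^j + k}(t,H)² ≤ (D / (2^{2j(1−H)} · (H − 1/2)²)) · ∑_{ℓ=1}^∞ ℓ^{−(2H+1)}. -/

import Mathlib

open MeasureTheory ProbabilityTheory Real Filter

noncomputable section

/-- The mother Haar wavelet: 1 on [0,1/2), -1 on [1/2,1], 0 otherwise. -/
def haarMother (s : ℝ) : ℝ :=
  if s ∈ Set.Ico (0 : ℝ) (1/2) then 1 else if s ∈ Set.Icc (1/2 : ℝ) 1 then -1 else 0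

/-- The Haar orthonormal basis of L²[0,1]: `haarFun 0 = 1` on `[0,1]`, and for
`n = 2^j + k` with `0 ≤ k < 2^j`, `haarFun n s = 2^(j/2) * haarMother (2^j * s - k)`. -/
def haarFun (n : ℕ) (s : ℝ) : ℝ :=
  if n = 0 then (if s ∈ Set.Icc (0 : ℝ) 1 then 1 else 0)
  else (2 : ℝ) ^ ((Nat.log2 n : ℝ) / 2) *
    haarMother ((2 : ℝ) ^ (Nat.log2 n : ℕ) * s - ((n - 2 ^ Nat.log2 n : ℕ) : ℝ))

/-- Inner product on L²[0,1]. -/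
def innerUnit (f g : ℝ → ℝ) : ℝ := ∫ s in (0 : ℝ)..1, f s * g s

/-- Inner product on L²[-1,0]. -/
def innerNeg (f g : ℝ → ℝ) : ℝ := ∫ s in (-1 : ℝ)..0, f s * g s

/-- The Haar orthonormal basis of L²[-1,0]. -/
def haarFunNeg (n : ℕ) (s : ℝ) : ℝ := haarFun n (s + 1)

/-- `f_t^{(1)}(s) = (t-s)^(H-1/2)` for `s ∈ [0,t)`, `0` otherwise. -/
def f1 (H t : ℝ) (s : ℝ) : ℝ := if 0 ≤ s ∧ s < t then (t - s) ^ (H - 1/2) else 0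

/-- `f_t^{(2)}(s) = (t-s)^(H-1/2) - (-s)^(H-1/2)` for `s ∈ [-1,0)`, `0` otherwise. -/
def f2 (H t : ℝ) (s : ℝ) : ℝ :=
  if -1 ≤ s ∧ s < 0 then (t - s) ^ (H - 1/2) - (-s) ^ (H - 1/2) else 0

/-- Haar coefficient `⟨f_t^{(1)}, ℋ_n⟩`. -/
def coeff1 (H t : ℝ) (n : ℕ) : ℝ := innerUnit (f1 H t) (haarFun n)

/-- Haar coefficient `⟨f_t^{(2)}, ℋ̃_n⟩`. -/
def coeff2 (H t : ℝ) (n : ℕ) : ℝ := innerNeg (f2 H t) (haarFunNeg n)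

/-- `g_n(t,H) = ∫₀¹ ((t + 1/x)^(H-3/2) - (1/x)^(H-3/2)) x⁻³ (∫₀ˣ ℋ_n(y) dy) dx`. -/
def gCoeff (H t : ℝ) (n : ℕ) : ℝ :=
  ∫ x in (0 : ℝ)..1,
    ((t + x⁻¹) ^ (H - 3/2) - (x⁻¹) ^ (H - 3/2)) * (x⁻¹) ^ (3 : ℕ) *
      (∫ y in (0 : ℝ)..x, haarFun n y)

/-- `C_H = 1/Γ(H + 1/2)`. -/
def CH (H : ℝ) : ℝ := 1 / Real.Gamma (H + 1/2)

lemma haarMother_eq (s : ℝ) : haarMother s =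
    (Set.Ico (0:ℝ) (1/2)).indicator (fun _ => (1:ℝ)) s
      + (Set.Icc (1/2:ℝ) 1).indicator (fun _ => (-1:ℝ)) s := by
  unfold haarMother
  simp only [Set.indicator_apply, Set.mem_Ico, Set.mem_Icc]
  split_ifs with h1 h2 h3 <;> norm_num
  linarith [h1.2, h2.1]

lemma vol_eq {S : Set ℝ} {x y : ℝ} (h1 : Set.Ioo x y ⊆ S) (h2 : S ⊆ Set.Icc x y) :
    volume S = ENNReal.ofReal (y - x) := by
  refine le_antisymm ?_ ?_
  · calc volume S ≤ volume (Set.Icc x y) := measure_mono h2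
      _ = ENNReal.ofReal (y - x) := Real.volume_Icc
  · calc ENNReal.ofReal (y - x) = volume (Set.Ioo x y) := Real.volume_Ioo.symm
      _ ≤ volume S := measure_mono h1

lemma integral_indicator_interval {a b r : ℝ} (hab : a ≤ b) {S : Set ℝ} (hS : MeasurableSet S) :
    ∫ s in a..b, S.indicator (fun _ => r) s = (volume (S ∩ Set.Ioc a b)).toReal * r := by
  rw [intervalIntegral.integral_of_le hab, MeasureTheory.integral_indicator hS,
    MeasureTheory.setIntegral_const, measureReal_restrict_apply hS]
  simp [mul_comm, measureReal_def]

lemma intervalIntegrable_indicator' {a b r : ℝ} {S : Set ℝ} (hS : MeasurableSet S) :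
    IntervalIntegrable (S.indicator (fun _ => r)) volume a b := by
  constructor <;>
  · rw [IntegrableOn, integrable_indicator_iff hS]
    refine integrableOn_const (ne_of_lt ?_)
    exact lt_of_le_of_lt (measure_mono (Set.subset_univ S)) (by rw [Measure.restrict_apply_univ]; exact measure_Ioc_lt_top)

lemma intervalIntegrable_haarMother (a b : ℝ) : IntervalIntegrable haarMother volume a b := by
  have h : haarMother = fun s => (Set.Ico (0:ℝ) (1/2)).indicator (fun _ => (1:ℝ)) s
      + (Set.Icc (1/2:ℝ) 1).indicator (fun _ => (-1:ℝ)) s := funext haarMother_eq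
  rw [h]
  exact (intervalIntegrable_indicator' measurableSet_Ico).add
    (intervalIntegrable_indicator' measurableSet_Icc)

lemma integral_haarMother_of_le {a b : ℝ} (hab : a ≤ b) :
    ∫ s in a..b, haarMother s
      = max (min b (1/2) - max a 0) 0 - max (min b 1 - max a (1/2)) 0 := by
  have v1 : volume (Set.Ico (0:ℝ) (1/2) ∩ Set.Ioc a b)
      = ENNReal.ofReal (min b (1/2) - max a 0) := by
    apply vol_eq
    · rintro z ⟨hz1, hz2⟩
      exact ⟨⟨le_of_lt (lt_of_le_of_lt (le_max_right a 0) hz1),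
        lt_of_lt_of_le hz2 (min_le_right _ _)⟩,
        lt_of_le_of_lt (le_max_left a 0) hz1, le_of_lt (lt_of_lt_of_le hz2 (min_le_left _ _))⟩
    · rintro z ⟨⟨hz1, hz2⟩, hz3, hz4⟩
      exact ⟨max_le (le_of_lt hz3) hz1, le_min hz4 (le_of_lt hz2)⟩
  have v2 : volume (Set.Icc (1/2:ℝ) 1 ∩ Set.Ioc a b)
      = ENNReal.ofReal (min b 1 - max a (1/2)) := by
    apply vol_eq
    · rintro z ⟨hz1, hz2⟩
      exact ⟨⟨le_of_lt (lt_of_le_of_lt (le_max_right a _) hz1),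
        le_of_lt (lt_of_lt_of_le hz2 (min_le_right _ _))⟩,
        lt_of_le_of_lt (le_max_left a _) hz1, le_of_lt (lt_of_lt_of_le hz2 (min_le_left _ _))⟩
    · rintro z ⟨⟨hz1, hz2⟩, hz3, hz4⟩
      exact ⟨max_le (le_of_lt hz3) hz1, le_min hz4 hz2⟩
  have := intervalIntegral.integral_add (μ := volume) (a := a) (b := b)
    (intervalIntegrable_indicator' (r := (1:ℝ)) measurableSet_Ico (S := Set.Ico (0:ℝ) (1/2)))
    (intervalIntegrable_indicator' (r := (-1:ℝ)) measurableSet_Icc (S := Set.Icc (1/2:ℝ) 1))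
  calc ∫ s in a..b, haarMother s
      = ∫ s in a..b, ((Set.Ico (0:ℝ) (1/2)).indicator (fun _ => (1:ℝ)) s
          + (Set.Icc (1/2:ℝ) 1).indicator (fun _ => (-1:ℝ)) s) := by
        apply intervalIntegral.integral_congr; intro s _; exact haarMother_eq s
    _ = (∫ s in a..b, (Set.Ico (0:ℝ) (1/2)).indicator (fun _ => (1:ℝ)) s)
          + ∫ s in a..b, (Set.Icc (1/2:ℝ) 1).indicator (fun _ => (-1:ℝ)) s := this
    _ = max (min b (1/2) - max a 0) 0 - max (min b 1 - max a (1/2)) 0 := by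
        rw [integral_indicator_interval hab measurableSet_Ico,
          integral_indicator_interval hab measurableSet_Icc, v1, v2,
          ENNReal.toReal_ofReal', ENNReal.toReal_ofReal']
        ring

lemma integral_haarMother (u : ℝ) :
    ∫ s in (0:ℝ)..u, haarMother s = max 0 (min u (1-u)) := by
  rcases le_or_gt 0 u with h | h
  · rw [integral_haarMother_of_le h]
    rw [max_self, sub_zero, max_eq_right (by norm_num : (0:ℝ) ≤ 1/2)]
    rcases le_total u (1/2) with h1 | h1
    · rw [min_eq_left h1, min_eq_left (by linarith : u ≤ 1), max_eq_left h,
        max_eq_right (by linarith : u - 1/2 ≤ 0), max_eq_right (le_min h (by linarith)), sub_zero, min_eq_left (by linarith : u ≤ 1 - u)]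
    · rcases le_total u 1 with h2 | h2
      · rw [min_eq_right h1, min_eq_left h2, max_eq_left (by linarith : (0:ℝ) ≤ 1/2),
          max_eq_left (by linarith : 0 ≤ u - 1/2), min_eq_right (by linarith : 1 - u ≤ u),
          max_eq_right (by linarith : (0:ℝ) ≤ 1 - u)]
        ring
      · rw [min_eq_right h1, min_eq_right h2, max_eq_left (by linarith : (0:ℝ) ≤ 1/2),
          max_eq_left (by linarith : (0:ℝ) ≤ 1 - 1/2), min_eq_right (by linarith : 1 - u ≤ u),
          max_eq_left (by linarith : 1 - u ≤ 0)]
        ring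
  · rw [intervalIntegral.integral_symm, integral_haarMother_of_le h.le]
    rw [max_eq_right h.le, max_eq_right (by linarith : u ≤ (1:ℝ)/2),
      max_eq_left ((min_le_left u (1-u)).trans h.le)]
    norm_num

lemma log2_pow_add {j k : ℕ} (hk : k < 2^j) : Nat.log2 (2^j + k) = j := by
  rw [Nat.log2_eq_log_two]
  exact Nat.log_eq_of_pow_le_of_lt_pow (Nat.le_add_right _ _) (by rw [Nat.pow_succ]; omega)

lemma haarFun_eq {j k : ℕ} (hk : k < 2^j) (y : ℝ) :
    haarFun (2^j + k) y = 2^((j:ℝ)/2) * haarMother ((2:ℝ)^j * y - k) := by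
  have hn : 2^j + k ≠ 0 := by positivity
  rw [haarFun, if_neg hn, log2_pow_add hk]
  norm_num

lemma primitive_haarFun {j k : ℕ} (hk : k < 2^j) (x : ℝ) :
    ∫ y in (0:ℝ)..x, haarFun (2^j + k) y
      = 2^((j:ℝ)/2) * ((2:ℝ)^j)⁻¹
          * max 0 (min ((2:ℝ)^j*x - k) (1 - ((2:ℝ)^j*x - k))) := by
  have hp : ((2:ℝ)^j) ≠ 0 := by positivity
  have hM0 : ∫ s in (0:ℝ)..(-(k:ℝ)), haarMother s = 0 := by
    rw [integral_haarMother]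
    exact max_eq_left ((min_le_left _ _).trans (neg_nonpos.2 (Nat.cast_nonneg k)))
  calc ∫ y in (0:ℝ)..x, haarFun (2^j + k) y
      = ∫ y in (0:ℝ)..x, 2^((j:ℝ)/2) * haarMother ((2:ℝ)^j * y - k) := by
        apply intervalIntegral.integral_congr; intro y _; exact haarFun_eq hk y
    _ = 2^((j:ℝ)/2) * ∫ y in (0:ℝ)..x, haarMother ((2:ℝ)^j * y - k) :=
        intervalIntegral.integral_const_mul _ _
    _ = 2^((j:ℝ)/2) * (((2:ℝ)^j)⁻¹ • ∫ u in ((2:ℝ)^j*0 - k)..((2:ℝ)^j*x - k), haarMother u) := by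
        rw [intervalIntegral.integral_comp_mul_sub haarMother hp (k:ℝ)]
    _ = 2^((j:ℝ)/2) * ((2:ℝ)^j)⁻¹
          * max 0 (min ((2:ℝ)^j*x - k) (1 - ((2:ℝ)^j*x - k))) := by
        rw [mul_zero, zero_sub, ← intervalIntegral.integral_interval_sub_left
          (intervalIntegrable_haarMother 0 _) (intervalIntegrable_haarMother 0 _),
          integral_haarMother, hM0, sub_zero, smul_eq_mul]
        ring

lemma rpow_diff_le {a u t : ℝ} (ha : 0 < a) (hu : 0 < u) (ht : 0 ≤ t) :
    |(t + u)^(-a) - u^(-a)| ≤ a * t * u^(-a-1) := by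
  have key : ∀ s ∈ Set.Icc u (u+t), HasDerivWithinAt (fun s : ℝ => s^(-a))
      ((-a) * s^(-a-1)) (Set.Icc u (u+t)) s := by
    intro s hs
    exact (Real.hasDerivAt_rpow_const (Or.inl (ne_of_gt (lt_of_lt_of_le hu hs.1)))).hasDerivWithinAt
  have bound : ∀ s ∈ Set.Icc u (u+t), ‖(-a) * s^(-a-1)‖ ≤ a * u^(-a-1) := by
    intro s hs
    rw [norm_mul, norm_neg, Real.norm_eq_abs, Real.norm_eq_abs, abs_of_pos ha,
      abs_of_pos (Real.rpow_pos_of_pos (lt_of_lt_of_le hu hs.1) _)]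
    exact mul_le_mul_of_nonneg_left
      (Real.rpow_le_rpow_of_nonpos hu hs.1 (by linarith)) ha.le
  have h := (convex_Icc u (u+t)).norm_image_sub_le_of_norm_hasDerivWithin_le key bound
    (Set.left_mem_Icc.2 (by linarith)) (Set.right_mem_Icc.2 (by linarith))
  rw [Real.norm_eq_abs, Real.norm_eq_abs, add_sub_cancel_left, abs_of_nonneg ht] at h
  calc |(t + u)^(-a) - u^(-a)| = |(u + t)^(-a) - u^(-a)| := by rw [add_comm t u]
    _ ≤ a * u^(-a-1) * t := h
    _ = a * t * u^(-a-1) := by ring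

lemma psi_bound {H t x : ℝ} (hH : H ∈ Set.Ioo (0:ℝ) 1) (ht : t ∈ Set.Icc (0:ℝ) 1)
    (hx : x ∈ Set.Ioc (0:ℝ) 1) :
    |((t + x⁻¹) ^ (H - 3/2) - (x⁻¹) ^ (H - 3/2)) * (x⁻¹) ^ (3:ℕ)|
      ≤ (3/2) * x ^ (-(H+1/2)) := by
  have hu : 0 < x⁻¹ := inv_pos.2 hx.1
  have hE : H - 3/2 = -(3/2 - H) := by ring
  have h1 : |(t + x⁻¹) ^ (H - 3/2) - (x⁻¹) ^ (H - 3/2)|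
      ≤ (3/2 - H) * t * (x⁻¹)^(-(3/2 - H) - 1) := by
    rw [hE]
    exact rpow_diff_le (by linarith [hH.2]) hu ht.1
  have h2 : (3/2 - H) * t * (x⁻¹)^(-(3/2 - H) - 1) ≤ (3/2) * (x⁻¹)^(-(3/2 - H) - 1) := by
    apply mul_le_mul_of_nonneg_right _ (Real.rpow_pos_of_pos hu _).le
    calc (3/2 - H) * t ≤ (3/2) * 1 :=
        mul_le_mul (by linarith [hH.1]) ht.2 ht.1 (by norm_num)
      _ = 3/2 := by ring
  have h3 : (x⁻¹)^(-(3/2 - H) - 1) * (x⁻¹)^(3:ℕ) = x ^ (-(H+1/2)) := by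
    rw [← Real.rpow_natCast (x⁻¹) 3, ← Real.rpow_add hu]
    rw [Real.inv_rpow hx.1.le, ← Real.rpow_neg hx.1.le]
    congr 1
    push_cast
    ring
  calc |((t + x⁻¹) ^ (H - 3/2) - (x⁻¹) ^ (H - 3/2)) * (x⁻¹) ^ (3:ℕ)|
      = |(t + x⁻¹) ^ (H - 3/2) - (x⁻¹) ^ (H - 3/2)| * (x⁻¹) ^ (3:ℕ) := by
        rw [abs_mul, abs_of_nonneg (pow_nonneg hu.le 3)]
    _ ≤ (3/2) * (x⁻¹)^(-(3/2 - H) - 1) * (x⁻¹) ^ (3:ℕ) :=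
        mul_le_mul_of_nonneg_right (h1.trans h2) (pow_nonneg hu.le 3)
    _ = (3/2) * x ^ (-(H+1/2)) := by rw [mul_assoc, h3]

lemma max0min_nonneg (u : ℝ) : 0 ≤ max 0 (min u (1-u)) := le_max_left _ _

lemma max0min_le_half (u : ℝ) : max 0 (min u (1-u)) ≤ 1/2 := by
  rcases le_total u (1/2) with h | h
  · exact max_le (by norm_num) ((min_le_left _ _).trans h)
  · exact max_le (by norm_num) ((min_le_right _ _).trans (by linarith))

lemma max0min_eq_zero {u : ℝ} (h : u ≤ 0 ∨ 1 ≤ u) : max 0 (min u (1-u)) = 0 := by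
  rcases h with h | h
  · exact max_eq_left ((min_le_left _ _).trans h)
  · exact max_eq_left ((min_le_right _ _).trans (by linarith))

lemma max0min_le_u {u : ℝ} (h : 0 ≤ u) : max 0 (min u (1-u)) ≤ u :=
  max_le h (min_le_left _ _)

lemma gCoeff_bound_pos {H t : ℝ} (hH : H ∈ Set.Ioo (0:ℝ) 1) (ht : t ∈ Set.Icc (0:ℝ) 1)
    {j k : ℕ} (hk : k < 2^j) (hk1 : 1 ≤ k) :
    |gCoeff H t (2^j + k)| ≤
      (3/4) * 2^((j:ℝ)/2) * (((2:ℝ)^j)⁻¹)^(2:ℕ) * ((k:ℝ)/(2:ℝ)^j)^(-(H+1/2)) := by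
  set p : ℝ := (2:ℝ)^j with hpdef
  have hp : 0 < p := by positivity
  set l : ℝ := (k:ℝ)/p with hldef
  set r : ℝ := ((k:ℝ)+1)/p with hrdef
  have hl : 0 < l := by
    apply div_pos _ hp; exact_mod_cast Nat.cast_pos.2 hk1
  have hlr : l ≤ r := by
    rw [hldef, hrdef]; gcongr; linarith
  have hr1 : r ≤ 1 := by
    rw [hrdef, div_le_one hp, hpdef]
    have : (k:ℝ) + 1 ≤ ((2^j : ℕ) : ℝ) := by exact_mod_cast Nat.succ_le_of_lt hk
    simpa using this
  set d : ℝ := 2^((j:ℝ)/2) * p⁻¹ * (1/2) with hddef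
  have hd : 0 ≤ d := by positivity
  set g : ℝ → ℝ := fun x => (3/2) * x^(-(H+1/2)) * d with hgdef
  set G : ℝ → ℝ := (Set.Icc l r).indicator g with hGdef
  have hgcont : ContinuousOn g (Set.Icc l r) := by
    apply ContinuousOn.mul (ContinuousOn.mul continuousOn_const ?_) continuousOn_const
    exact continuousOn_id.rpow_const (fun x hx => Or.inl (ne_of_gt (lt_of_lt_of_le hl hx.1)))
  have hgint : IntegrableOn g (Set.Icc l r) volume := hgcont.integrableOn_Icc
  have hGint : IntervalIntegrable G volume 0 1 := by
    rw [intervalIntegrable_iff_integrableOn_Ioc_of_le (by norm_num : (0:ℝ) ≤ 1), hGdef,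
      IntegrableOn, integrable_indicator_iff measurableSet_Icc, IntegrableOn,
      Measure.restrict_restrict measurableSet_Icc]
    exact hgint.mono_set Set.inter_subset_left
  -- pointwise bound
  have hae : ∀ᵐ x ∂(volume.restrict (Set.uIoc (0:ℝ) 1)),
      ‖((t + x⁻¹) ^ (H - 3/2) - (x⁻¹) ^ (H - 3/2)) * (x⁻¹) ^ (3:ℕ) *
        (∫ y in (0:ℝ)..x, haarFun (2^j + k) y)‖ ≤ G x := by
    rw [Set.uIoc_of_le (by norm_num : (0:ℝ) ≤ 1)]
    refine (ae_restrict_iff' measurableSet_Ioc).2 (Filter.Eventually.of_forall ?_)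
    intro x hx
    rw [Real.norm_eq_abs, abs_mul, primitive_haarFun hk x]
    by_cases hmem : x ∈ Set.Icc l r
    · rw [hGdef, Set.indicator_of_mem hmem, hgdef]
      have hb1 := psi_bound hH ht hx
      have hb2 : |2^((j:ℝ)/2) * p⁻¹ * max 0 (min (p*x - k) (1 - (p*x - k)))| ≤ d := by
        rw [abs_mul, abs_of_nonneg (by positivity : (0:ℝ) ≤ 2^((j:ℝ)/2) * p⁻¹),
          abs_of_nonneg (max0min_nonneg _), hddef]
        exact mul_le_mul_of_nonneg_left (max0min_le_half _) (by positivity)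
      simp only [hgdef]
      exact mul_le_mul hb1 hb2 (abs_nonneg _) (mul_nonneg (by norm_num) (Real.rpow_nonneg hx.1.le _))
    · have hzero : max 0 (min (p*x - k) (1 - (p*x - k))) = 0 := by
        apply max0min_eq_zero
        rw [Set.mem_Icc, not_and_or] at hmem
        rcases hmem with hm | hm
        · left
          push_neg at hm
          rw [hldef, lt_div_iff₀ hp] at hm
          linarith [mul_comm p x]
        · right
          push_neg at hm
          rw [hrdef, div_lt_iff₀ hp] at hm
          linarith [mul_comm p x]
      rw [hzero, hGdef, Set.indicator_of_notMem hmem]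
      simp
  have hmain : ‖gCoeff H t (2^j+k)‖ ≤ |∫ x in (0:ℝ)..1, G x| := by
    rw [gCoeff]
    exact intervalIntegral.norm_integral_le_abs_of_norm_le hae hGint
  have hGval : ∫ x in (0:ℝ)..1, G x = ∫ x in l..r, g x := by
    rw [intervalIntegral.integral_of_le (by norm_num : (0:ℝ) ≤ 1), hGdef,
      integral_indicator measurableSet_Icc, Measure.restrict_restrict measurableSet_Icc]
    have hss : Set.Icc l r ∩ Set.Ioc 0 1 = Set.Icc l r :=
      Set.inter_eq_left.2 (fun x hx => ⟨lt_of_lt_of_le hl hx.1, hx.2.trans hr1⟩)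
    rw [hss, MeasureTheory.integral_Icc_eq_integral_Ioc, ← intervalIntegral.integral_of_le hlr]
  have hgiv : IntervalIntegrable g volume l r := by
    apply ContinuousOn.intervalIntegrable
    rwa [Set.uIcc_of_le hlr]
  have hgb : ∫ x in l..r, g x ≤ (r - l) * ((3/2) * l^(-(H+1/2)) * d) := by
    have hc : ∀ x ∈ Set.Icc l r, g x ≤ (3/2) * l^(-(H+1/2)) * d := by
      intro x hx
      simp only [hgdef]
      apply mul_le_mul_of_nonneg_right _ hd
      exact mul_le_mul_of_nonneg_left
        (Real.rpow_le_rpow_of_nonpos hl hx.1 (by linarith [hH.1] : -(H+1/2) ≤ 0)) (by norm_num)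
    calc ∫ x in l..r, g x ≤ ∫ _x in l..r, ((3/2) * l^(-(H+1/2)) * d) :=
        intervalIntegral.integral_mono_on hlr hgiv intervalIntegrable_const hc
      _ = (r - l) * ((3/2) * l^(-(H+1/2)) * d) := by
          rw [intervalIntegral.integral_const, smul_eq_mul]
  have hGnn : 0 ≤ ∫ x in l..r, g x := by
    apply intervalIntegral.integral_nonneg hlr
    intro x hx
    simp only [hgdef]
    exact mul_nonneg (mul_nonneg (by norm_num)
      (Real.rpow_nonneg (hl.le.trans hx.1) _)) hd
  have hrl : r - l = p⁻¹ := by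
    rw [hrdef, hldef]
    field_simp
    ring
  calc |gCoeff H t (2^j+k)| ≤ |∫ x in (0:ℝ)..1, G x| := hmain
    _ = ∫ x in l..r, g x := by rw [hGval, abs_of_nonneg hGnn]
    _ ≤ (r - l) * ((3/2) * l^(-(H+1/2)) * d) := hgb
    _ = (3/4) * 2^((j:ℝ)/2) * (((2:ℝ)^j)⁻¹)^(2:ℕ) * ((k:ℝ)/(2:ℝ)^j)^(-(H+1/2)) := by
        rw [hrl, hddef]
        show p⁻¹ * (3/2 * ((k:ℝ)/p)^(-(H+1/2)) * (2^((j:ℝ)/2) * p⁻¹ * (1/2)))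
          = 3/4 * 2^((j:ℝ)/2) * (p⁻¹)^(2:ℕ) * ((k:ℝ)/p)^(-(H+1/2))
        ring

lemma gCoeff_bound_zero {H t : ℝ} (hH : H ∈ Set.Ioo (0:ℝ) 1) (ht : t ∈ Set.Icc (0:ℝ) 1)
    (j : ℕ) :
    |gCoeff H t (2^j + 0)| ≤ 3 * 2^((j:ℝ)/2) * (((2:ℝ)^j)⁻¹)^((3:ℝ)/2 - H) := by
  have hk : (0:ℕ) < 2^j := by positivity
  set p : ℝ := (2:ℝ)^j with hpdef
  have hp : 0 < p := by positivity
  have hp1 : 1 ≤ p := one_le_pow₀ (by norm_num)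
  set r : ℝ := p⁻¹ with hrdef
  have hr0 : 0 < r := by positivity
  have hr1 : r ≤ 1 := inv_le_one_of_one_le₀ hp1
  set g : ℝ → ℝ := fun x => (3/2) * 2^((j:ℝ)/2) * x^((1:ℝ)/2 - H) with hgdef
  set G : ℝ → ℝ := (Set.Icc 0 r).indicator g with hGdef
  have hgint : IntegrableOn g (Set.Icc 0 r) volume := by
    rw [integrableOn_Icc_iff_integrableOn_Ioc]
    exact ((intervalIntegral.intervalIntegrable_rpow' (by linarith [hH.2] : (-1:ℝ) < 1/2 - H)).const_mul
      ((3:ℝ)/2 * 2^((j:ℝ)/2))).1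
  have hGint : IntervalIntegrable G volume 0 1 := by
    rw [intervalIntegrable_iff_integrableOn_Ioc_of_le (by norm_num : (0:ℝ) ≤ 1), hGdef,
      IntegrableOn, integrable_indicator_iff measurableSet_Icc, IntegrableOn,
      Measure.restrict_restrict measurableSet_Icc]
    exact hgint.mono_set Set.inter_subset_left
  have hae : ∀ᵐ x ∂(volume.restrict (Set.uIoc (0:ℝ) 1)),
      ‖((t + x⁻¹) ^ (H - 3/2) - (x⁻¹) ^ (H - 3/2)) * (x⁻¹) ^ (3:ℕ) *
        (∫ y in (0:ℝ)..x, haarFun (2^j + 0) y)‖ ≤ G x := by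
    rw [Set.uIoc_of_le (by norm_num : (0:ℝ) ≤ 1)]
    refine (ae_restrict_iff' measurableSet_Ioc).2 (Filter.Eventually.of_forall ?_)
    intro x hx
    rw [Real.norm_eq_abs, abs_mul, primitive_haarFun hk x]
    by_cases hmem : x ∈ Set.Icc 0 r
    · rw [hGdef, Set.indicator_of_mem hmem]
      have hb1 := psi_bound hH ht hx
      have hb2 : |2^((j:ℝ)/2) * p⁻¹ * max 0 (min (p*x - (0:ℕ)) (1 - (p*x - (0:ℕ))))|
          ≤ 2^((j:ℝ)/2) * x := by
        rw [abs_mul, abs_of_nonneg (by positivity : (0:ℝ) ≤ 2^((j:ℝ)/2) * p⁻¹),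
          abs_of_nonneg (max0min_nonneg _), Nat.cast_zero, sub_zero]
        calc 2^((j:ℝ)/2) * p⁻¹ * max 0 (min (p*x) (1 - p*x))
            ≤ 2^((j:ℝ)/2) * p⁻¹ * (p*x) := mul_le_mul_of_nonneg_left
              (max0min_le_u (mul_nonneg hp.le hx.1.le)) (by positivity)
          _ = 2^((j:ℝ)/2) * x := by field_simp
      have : |((t + x⁻¹) ^ (H - 3/2) - (x⁻¹) ^ (H - 3/2)) * (x⁻¹) ^ (3:ℕ)| *
          |2^((j:ℝ)/2) * p⁻¹ * max 0 (min (p*x - (0:ℕ)) (1 - (p*x - (0:ℕ))))|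
          ≤ (3/2) * x^(-(H+1/2)) * (2^((j:ℝ)/2) * x) :=
        mul_le_mul hb1 hb2 (abs_nonneg _)
          (mul_nonneg (by norm_num) (Real.rpow_nonneg hx.1.le _))
      refine this.trans (le_of_eq ?_)
      simp only [hgdef]
      rw [show (3:ℝ)/2 * x^(-(H+1/2)) * (2^((j:ℝ)/2) * x)
            = 3/2 * 2^((j:ℝ)/2) * (x^(-(H+1/2)) * x^(1:ℝ)) from by rw [Real.rpow_one]; ring,
        ← Real.rpow_add hx.1, show -(H+1/2) + 1 = (1:ℝ)/2 - H from by ring]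
    · have hxr : r < x := by
        rw [Set.mem_Icc, not_and_or] at hmem
        rcases hmem with hm | hm
        · push_neg at hm; linarith [hx.1]
        · push_neg at hm; exact hm
      have hzero : max 0 (min (p*x - (0:ℕ)) (1 - (p*x - (0:ℕ)))) = 0 := by
        apply max0min_eq_zero
        right
        rw [Nat.cast_zero, sub_zero]
        rw [hrdef, inv_lt_iff_one_lt_mul₀ hp] at hxr
        linarith [mul_comm p x]
      rw [hzero, hGdef, Set.indicator_of_notMem hmem]
      simp
  have hmain : ‖gCoeff H t (2^j + 0)‖ ≤ |∫ x in (0:ℝ)..1, G x| := by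
    rw [gCoeff]
    exact intervalIntegral.norm_integral_le_abs_of_norm_le hae hGint
  have hGval : ∫ x in (0:ℝ)..1, G x = ∫ x in (0:ℝ)..r, g x := by
    rw [intervalIntegral.integral_of_le (by norm_num : (0:ℝ) ≤ 1), hGdef,
      integral_indicator measurableSet_Icc, Measure.restrict_restrict measurableSet_Icc]
    have hss : Set.Icc 0 r ∩ Set.Ioc 0 1 = Set.Ioc 0 r := by
      ext x
      simp only [Set.mem_inter_iff, Set.mem_Icc, Set.mem_Ioc]
      constructor
      · rintro ⟨⟨_, h2⟩, h3, _⟩; exact ⟨h3, h2⟩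
      · rintro ⟨h1, h2⟩; exact ⟨⟨h1.le, h2⟩, h1, h2.trans hr1⟩
    rw [hss, ← intervalIntegral.integral_of_le hr0.le]
  have hgval2 : ∫ x in (0:ℝ)..r, g x
      = (3/2) * 2^((j:ℝ)/2) * (r^((3:ℝ)/2 - H) / ((3:ℝ)/2 - H)) := by
    simp only [hgdef]
    rw [intervalIntegral.integral_const_mul, integral_rpow (Or.inl (by linarith [hH.2]))]
    rw [Real.zero_rpow (by intro hc; rw [show (1:ℝ)/2 - H + 1 = 3/2 - H by ring] at hc; nlinarith [hH.2] : (1:ℝ)/2 - H + 1 ≠ 0),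
      show (1:ℝ)/2 - H + 1 = 3/2 - H by ring]
    ring
  have hGnn : 0 ≤ ∫ x in (0:ℝ)..r, g x := by
    apply intervalIntegral.integral_nonneg hr0.le
    intro x hx
    simp only [hgdef]
    exact mul_nonneg (by positivity) (Real.rpow_nonneg hx.1 _)
  calc |gCoeff H t (2^j + 0)| ≤ |∫ x in (0:ℝ)..1, G x| := hmain
    _ = ∫ x in (0:ℝ)..r, g x := by rw [hGval, abs_of_nonneg hGnn]
    _ = (3/2) * 2^((j:ℝ)/2) * (r^((3:ℝ)/2 - H) / ((3:ℝ)/2 - H)) := hgval2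
    _ ≤ (3/2) * 2^((j:ℝ)/2) * (r^((3:ℝ)/2 - H) * 2) := by
        apply mul_le_mul_of_nonneg_left _ (by positivity)
        rw [div_le_iff₀ (by linarith [hH.2] : (0:ℝ) < 3/2 - H)]
        have h1 : (0:ℝ) ≤ r^((3:ℝ)/2 - H) := Real.rpow_nonneg hr0.le _
        nlinarith [hH.1, hH.2]
    _ = 3 * 2^((j:ℝ)/2) * (((2:ℝ)^j)⁻¹)^((3:ℝ)/2 - H) := by
        rw [hrdef, hpdef]; ring

lemma rpow_sq_expand (a : ℝ) : ((2:ℝ)^a)^(2:ℕ) = (2:ℝ)^(a+a) := by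
  rw [Real.rpow_add (by norm_num), sq]

lemma two_pow_inv_eq (j : ℕ) : ((2:ℝ)^(j:ℕ))⁻¹ = (2:ℝ)^(-(j:ℝ)) := by
  rw [← Real.rpow_natCast 2 j, ← Real.rpow_neg (by norm_num)]

lemma sq_bound_zero {H t : ℝ} (hH : H ∈ Set.Ioo (0:ℝ) 1) (ht : t ∈ Set.Icc (0:ℝ) 1)
    (j : ℕ) :
    (gCoeff H t (2^j + 0))^2 ≤ 9 * (2:ℝ)^(-(2*(j:ℝ)*(1-H))) := by
  have h := gCoeff_bound_zero hH ht j
  have h2 : (gCoeff H t (2^j+0))^2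
      ≤ (3 * 2^((j:ℝ)/2) * (((2:ℝ)^j)⁻¹)^((3:ℝ)/2 - H))^2 := by
    rw [← sq_abs]
    exact pow_le_pow_left₀ (abs_nonneg _) h 2
  refine h2.trans (le_of_eq ?_)
  rw [two_pow_inv_eq, ← Real.rpow_mul (by norm_num : (0:ℝ) ≤ 2)]
  rw [mul_pow, mul_pow, rpow_sq_expand, rpow_sq_expand, mul_assoc,
    ← Real.rpow_add (by norm_num : (0:ℝ) < 2),
    show (j:ℝ)/2 + (j:ℝ)/2 + (-(j:ℝ)*(3/2 - H) + -(j:ℝ)*(3/2 - H)) = -(2*(j:ℝ)*(1-H)) by ring]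
  norm_num

lemma sq_bound_pos {H t : ℝ} (hH : H ∈ Set.Ioo (0:ℝ) 1) (ht : t ∈ Set.Icc (0:ℝ) 1)
    {j k : ℕ} (hk : k < 2^j) (hk1 : 1 ≤ k) :
    (gCoeff H t (2^j + k))^2
      ≤ (9/16) * (2:ℝ)^(-(2*(j:ℝ)*(1-H))) * (k:ℝ)^(-(2*H+1)) := by
  have h := gCoeff_bound_pos hH ht hk hk1
  have h2 : (gCoeff H t (2^j+k))^2
      ≤ ((3/4) * 2^((j:ℝ)/2) * (((2:ℝ)^j)⁻¹)^(2:ℕ) * ((k:ℝ)/(2:ℝ)^j)^(-(H+1/2)))^2 := by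
    rw [← sq_abs]
    exact pow_le_pow_left₀ (abs_nonneg _) h 2
  refine h2.trans (le_of_eq ?_)
  have hk0 : (0:ℝ) ≤ (k:ℝ) := Nat.cast_nonneg k
  have hpinv : (0:ℝ) ≤ ((2:ℝ)^(j:ℕ))⁻¹ := by positivity
  rw [show ((k:ℝ)/(2:ℝ)^(j:ℕ)) = (k:ℝ) * ((2:ℝ)^(j:ℕ))⁻¹ from div_eq_mul_inv _ _,
    Real.mul_rpow hk0 hpinv]
  rw [two_pow_inv_eq, ← Real.rpow_mul (by norm_num : (0:ℝ) ≤ 2)]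
  rw [mul_pow, mul_pow, mul_pow, mul_pow, rpow_sq_expand, rpow_sq_expand, rpow_sq_expand]
  rw [← Real.rpow_natCast ((k:ℝ)^(-(H+1/2))) 2, ← Real.rpow_mul hk0]
  rw [show -(H+1/2) * ((2:ℕ):ℝ) = -(2*H+1) by push_cast; ring]
  rw [rpow_sq_expand]
  rw [show ((3:ℝ)/4)^(2:ℕ) * 2^((j:ℝ)/2 + (j:ℝ)/2) * 2^(-(j:ℝ) + -(j:ℝ) + (-(j:ℝ) + -(j:ℝ))) *
      ((k:ℝ)^(-(2*H+1)) * 2^(-(j:ℝ)*(-(H+1/2)) + -(j:ℝ)*(-(H+1/2))))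
      = ((3:ℝ)/4)^(2:ℕ) * (2^((j:ℝ)/2 + (j:ℝ)/2) * 2^(-(j:ℝ) + -(j:ℝ) + (-(j:ℝ) + -(j:ℝ)))
          * 2^(-(j:ℝ)*(-(H+1/2)) + -(j:ℝ)*(-(H+1/2)))) * (k:ℝ)^(-(2*H+1)) from by ring,
    ← Real.rpow_add (by norm_num : (0:ℝ) < 2), ← Real.rpow_add (by norm_num : (0:ℝ) < 2),
    show (j:ℝ)/2 + (j:ℝ)/2 + (-(j:ℝ) + -(j:ℝ) + (-(j:ℝ) + -(j:ℝ)))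
        + (-(j:ℝ)*(-(H+1/2)) + -(j:ℝ)*(-(H+1/2))) = -(2*(j:ℝ)*(1-H)) from by ring]
  norm_num

/-- level-`j` bound for the squared coefficients `g_n(t,H)`. -/
theorem stmt19 :
    ∃ D : ℝ, 0 < D ∧
      ∀ H : ℝ, H ∈ Set.Ioo (0 : ℝ) 1 → H ≠ 1/2 →
      ∀ t : ℝ, t ∈ Set.Icc (0 : ℝ) 1 →
      ∀ j : ℕ,
        (∑ k ∈ Finset.range (2 ^ j), (gCoeff H t (2 ^ j + k)) ^ 2)
          ≤ D / ((2 : ℝ) ^ (2 * (j : ℝ) * (1 - H)) * (H - 1/2) ^ 2)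
              * ∑' ℓ : ℕ, ((ℓ : ℝ) + 1) ^ (-(2 * H + 1)) := by
  refine ⟨3, by norm_num, ?_⟩
  intro H hH hne t ht j
  set A : ℝ := (2:ℝ)^(-(2*(j:ℝ)*(1-H))) with hAdef
  have hA : 0 < A := Real.rpow_pos_of_pos (by norm_num) _
  have hsum : Summable (fun ℓ : ℕ => ((ℓ:ℝ)+1)^(-(2*H+1))) := by
    have h1 : Summable (fun n : ℕ => (n:ℝ)^(-(2*H+1))) :=
      Real.summable_nat_rpow.2 (by linarith [hH.1])
    have h2 := (summable_nat_add_iff 1).2 h1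
    exact h2.congr (fun n => by push_cast; norm_num)
  set S : ℝ := ∑' ℓ : ℕ, ((ℓ:ℝ)+1)^(-(2*H+1)) with hSdef
  have hSnn : ∀ ℓ : ℕ, 0 ≤ ((ℓ:ℝ)+1)^(-(2*H+1)) :=
    fun ℓ => Real.rpow_nonneg (by positivity) _
  have hS1 : 1 ≤ S := by
    have h := hsum.le_tsum 0 (fun i _ => hSnn i)
    rw [show (((0:ℕ):ℝ)+1)^(-(2*H+1)) = 1 from by simp] at h
    exact h
  obtain ⟨m, hm⟩ : ∃ m, 2^j = m + 1 :=
    ⟨2^j - 1, by have := Nat.one_le_two_pow (n := j); omega⟩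
  have hsum_le : ∑ k ∈ Finset.range (2^j), (gCoeff H t (2^j+k))^2 ≤ 10 * A * S := by
    rw [show Finset.range (2^j) = Finset.range (m+1) from by rw [hm],
      Finset.sum_range_succ']
    have hterm0 : (gCoeff H t (2^j + 0))^2 ≤ 9 * A := sq_bound_zero hH ht j
    have hterms : ∑ i ∈ Finset.range m, (gCoeff H t (2^j + (i+1)))^2
        ≤ (9/16) * A * S := by
      calc ∑ i ∈ Finset.range m, (gCoeff H t (2^j + (i+1)))^2
          ≤ ∑ i ∈ Finset.range m, (9/16) * A * ((i:ℝ)+1)^(-(2*H+1)) := by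
            apply Finset.sum_le_sum
            intro i hi
            have hi2 : i + 1 < 2^j := by
              rw [hm]
              exact Nat.succ_lt_succ (Finset.mem_range.1 hi)
            have hb := sq_bound_pos hH ht hi2 (Nat.le_add_left 1 i)
            rw [← hAdef] at hb
            push_cast at hb
            exact hb
        _ = (9/16) * A * ∑ i ∈ Finset.range m, ((i:ℝ)+1)^(-(2*H+1)) := by
            rw [← Finset.mul_sum]
        _ ≤ (9/16) * A * S := by
            apply mul_le_mul_of_nonneg_left _ (by positivity)
            exact hsum.sum_le_tsum _ (fun i _ => hSnn i)
    have hterm0' : (gCoeff H t (2^j + 0))^2 ≤ 9 * A * S := by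
      calc (gCoeff H t (2^j + 0))^2 ≤ 9 * A := hterm0
        _ = 9 * A * 1 := by ring
        _ ≤ 9 * A * S := by
            apply mul_le_mul_of_nonneg_left hS1 (by positivity)
    calc (∑ i ∈ Finset.range m, (gCoeff H t (2^j + (i+1)))^2) + (gCoeff H t (2^j + 0))^2
        ≤ (9/16) * A * S + 9 * A * S := add_le_add hterms hterm0'
      _ ≤ 10 * A * S := by nlinarith [hA, hS1]
  refine hsum_le.trans ?_
  set B : ℝ := (2:ℝ)^(2*(j:ℝ)*(1-H)) with hBdef
  have hB : 0 < B := Real.rpow_pos_of_pos (by norm_num) _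
  have hAB : A = B⁻¹ := by
    rw [hAdef, hBdef, ← Real.rpow_neg (by norm_num : (0:ℝ) ≤ 2)]
  have hc : 0 < (H - 1/2)^2 :=
    lt_of_le_of_ne (sq_nonneg _) (Ne.symm (pow_ne_zero 2 (sub_ne_zero.2 hne)))
  have hc4 : (H - 1/2)^2 ≤ 1/4 := by nlinarith [hH.1, hH.2]
  apply mul_le_mul_of_nonneg_right _ (by linarith : (0:ℝ) ≤ S)
  rw [hAB]
  have hkey : (3:ℝ) / (B * (H - 1/2)^2) = (3 / (H - 1/2)^2) * B⁻¹ := by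
    field_simp
  rw [hkey]
  apply mul_le_mul_of_nonneg_right _ (inv_nonneg.2 hB.le)
  rw [le_div_iff₀ hc]
  linarith
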